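/- The stabilizer of the cuspidal cubic {[Z1:Z2:Z3] ∈ ℂP² : Z3·(Z2)² = (Z1)³} under the action of SL(3,ℂ) by projective transformations consists exactly of the matrices diag(a, a⁴, a⁻⁵) for a ∈ ℂ*; in particular it is one-dimensional. -/

import Mathlib

/-- The cubic form cutting out the cuspidal cubic `Z3·Z2² − Z1³` (indices `0,1,2`). -/
def cuspidalCubicForm (Z : Fin 3 → ℂ) : ℂ := Z 2 * (Z 1) ^ 2 - (Z 0) ^ 3

/-- The stabiliser of the cuspidal cubic under the `SL(3,ℂ)` action on `ℂP²` consists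
exactly of the matrices `diag(a, a⁴, a⁻⁵)`, `a ∈ ℂ*`. -/
theorem stabilizer_cuspidal_cubic (N : Matrix.SpecialLinearGroup (Fin 3) ℂ) :
    (∃ lam : ℂ, lam ≠ 0 ∧ ∀ Z : Fin 3 → ℂ,
      cuspidalCubicForm ((N : Matrix (Fin 3) (Fin 3) ℂ).mulVec Z) = lam * cuspidalCubicForm Z)
    ↔ ∃ a : ℂ, a ≠ 0 ∧
        (N : Matrix (Fin 3) (Fin 3) ℂ) = Matrix.diagonal ![a, a ^ 4, (a ^ 5)⁻¹] := by
  constructor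
  · rintro ⟨lam, hlam, h⟩
    set A := (N : Matrix (Fin 3) (Fin 3) ℂ) with hA
    have hdet : A.det = 1 := N.2
    rw [Matrix.det_fin_three] at hdet
    have E : ∀ x y z : ℂ,
        (A 2 0 * x + A 2 1 * y + A 2 2 * z) * (A 1 0 * x + A 1 1 * y + A 1 2 * z) ^ 2
          - (A 0 0 * x + A 0 1 * y + A 0 2 * z) ^ 3 = lam * (z * y ^ 2 - x ^ 3) := by
      intro x y z
      have hx := h ![x, y, z]
      simp [cuspidalCubicForm, Matrix.mulVec, dotProduct, Fin.sum_univ_three] at hx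
      linear_combination hx
    -- gradient of the cubic at the image of the cusp
    have h3 : A 2 2 * A 1 2 ^ 2 - A 0 2 ^ 3 = 0 := by linear_combination E 0 0 1
    have h8 : A 2 0 * A 1 2 ^ 2 + 2 * A 2 2 * A 1 0 * A 1 2 - 3 * A 0 0 * A 0 2 ^ 2 = 0 := by
      linear_combination (6 * E 1 0 1 - 2 * E (-1) 0 1 - E 2 0 1 - 3 * E 0 0 1) / 6
    have h9 : A 2 1 * A 1 2 ^ 2 + 2 * A 2 2 * A 1 1 * A 1 2 - 3 * A 0 1 * A 0 2 ^ 2 = 0 := by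
      linear_combination (6 * E 0 1 1 - 2 * E 0 (-1) 1 - E 0 2 1 - 3 * E 0 0 1) / 6
    set v : Fin 3 → ℂ := ![-3 * A 0 2 ^ 2, 2 * A 1 2 * A 2 2, A 1 2 ^ 2] with hv
    have hvec : Matrix.vecMul v A = 0 := by
      funext j
      fin_cases j <;>
        simp [hv, Matrix.vecMul, dotProduct, Fin.sum_univ_three]
      · linear_combination h8
      · linear_combination h9
      · linear_combination 3 * h3
    have hv0 : v = 0 := by
      have h1 : A * ((N⁻¹ : Matrix.SpecialLinearGroup (Fin 3) ℂ) : Matrix (Fin 3) (Fin 3) ℂ)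
          = 1 := by
        rw [hA, ← Matrix.SpecialLinearGroup.coe_mul, mul_inv_cancel,
          Matrix.SpecialLinearGroup.coe_one]
      calc v = Matrix.vecMul v 1 := (Matrix.vecMul_one v).symm
        _ = Matrix.vecMul v (A * ((N⁻¹ : Matrix.SpecialLinearGroup (Fin 3) ℂ) :
              Matrix (Fin 3) (Fin 3) ℂ)) := by rw [h1]
        _ = Matrix.vecMul (Matrix.vecMul v A)
              ((N⁻¹ : Matrix.SpecialLinearGroup (Fin 3) ℂ) : Matrix (Fin 3) (Fin 3) ℂ) := by
              rw [Matrix.vecMul_vecMul]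
        _ = 0 := by rw [hvec]; simp
    have hc : A 0 2 = 0 := by
      have h0 := congrFun hv0 0
      simpa [hv] using h0
    have hf : A 1 2 = 0 := by
      have h2 := congrFun hv0 2
      simpa [hv] using h2
    simp only [hc, hf, mul_zero, zero_mul, add_zero, zero_add, sub_zero, zero_sub] at E hdet
    -- A 2 2 ≠ 0
    have hi' : A 2 2 * (A 0 0 * A 1 1 - A 0 1 * A 1 0) = 1 := by linear_combination hdet
    have hine : A 2 2 ≠ 0 := fun h0 => by simp [h0] at hi'
    -- d = 0
    have hid : A 2 2 * A 1 0 ^ 2 = 0 := by linear_combination (E 1 0 1 + E (-1) 0 1) / 2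
    have hd : A 1 0 = 0 := by
      rcases mul_eq_zero.mp hid with h0 | h0
      · exact absurd h0 hine
      · exact (pow_eq_zero_iff two_ne_zero).mp h0
    simp only [hd, mul_zero, zero_mul, add_zero, zero_add, sub_zero, zero_sub] at E hi'
    have hane : A 0 0 ≠ 0 := fun h0 => by simp [h0] at hi'
    have hene : A 1 1 ≠ 0 := fun h0 => by simp [h0] at hi'
    -- b = 0
    have hab : A 0 0 ^ 2 * A 0 1 = 0 := by
      linear_combination (-(E 1 1 0) - E (-1) 1 0) / 6 + (E 0 1 0) / 3
    have hb : A 0 1 = 0 := by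
      rcases mul_eq_zero.mp hab with h0 | h0
      · exact absurd ((pow_eq_zero_iff two_ne_zero).mp h0) hane
      · exact h0
    -- h = 0
    have hhe : A 2 1 * A 1 1 ^ 2 = A 0 1 ^ 3 := by linear_combination E 0 1 0
    have hh : A 2 1 = 0 := by
      rw [hb] at hhe
      rcases mul_eq_zero.mp (by linear_combination hhe : A 2 1 * A 1 1 ^ 2 = 0) with h0 | h0
      · exact h0
      · exact absurd ((pow_eq_zero_iff two_ne_zero).mp h0) hene
    simp only [hb, hh, mul_zero, zero_mul, add_zero, zero_add, sub_zero, zero_sub] at E hi'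
    -- lam = a³
    have hlam' : lam = A 0 0 ^ 3 := by linear_combination E 1 0 0
    -- g = 0
    have hge : A 2 0 * A 1 1 ^ 2 = 0 := by linear_combination E 1 1 0 - hlam'
    have hg : A 2 0 = 0 := by
      rcases mul_eq_zero.mp hge with h0 | h0
      · exact h0
      · exact absurd ((pow_eq_zero_iff two_ne_zero).mp h0) hene
    -- i e² = a³
    have hie : A 2 2 * A 1 1 ^ 2 = A 0 0 ^ 3 := by linear_combination E 0 1 1 + hlam'
    -- e = a⁴
    have he4 : A 1 1 = A 0 0 ^ 4 := by
      linear_combination A 0 0 * hie - A 1 1 * hi'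
    -- i = a⁻⁵
    have hi5 : A 2 2 = (A 0 0 ^ 5)⁻¹ := by
      have h5 : A 0 0 ^ 5 * A 2 2 = 1 := by
        linear_combination hi' - A 0 0 * A 2 2 * he4
      field_simp
      linear_combination h5
    refine ⟨A 0 0, hane, ?_⟩
    ext j k
    fin_cases j <;> fin_cases k <;>
      simp [Matrix.diagonal]
    · exact hb
    · exact hc
    · exact hd
    · exact he4
    · exact hf
    · exact hg
    · exact hh
    · exact hi5
  · rintro ⟨a, ha, hN⟩
    refine ⟨a ^ 3, pow_ne_zero _ ha, fun Z => ?_⟩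
    rw [hN]
    simp [cuspidalCubicForm, Matrix.mulVec_diagonal]
    field_simp
    try ring
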